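/- Let F ⊆ K be fields, let r be a positive integer, and let α_1, …, α_{2r−2} ∈ K satisfy α_i ∉ F(α_1, …, α_{i−1}) for every i. Let A = (a_{ij}) ∈ K^{r×r} be a matrix such that a_{11} = 1 and, for all (i,j) ≠ (1,1) with 1 ≤ i, j ≤ r, a_{ij} ∈ F(α_1, …, α_{i+j−2}) \ F(α_1, …, α_{i+j−3}). Then A is invertible. -/

import Mathlib

open IntermediateField Finset

section Aux
variable {F K : Type*} [Field F] [Field K] [Algebra F K]

lemma det_mem_intermediate {n : ℕ} (E : IntermediateField F K)
    (M : Matrix (Fin n) (Fin n) K) (h : ∀ i j, M i j ∈ E) : M.det ∈ E := by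
  rw [Matrix.det_apply]
  refine sum_mem fun σ _ => ?_
  rw [Units.smul_def]
  exact zsmul_mem (prod_mem (fun i _ => h _ _)) _

lemma adjoin_icc_mono (α : ℕ → K) {m n : ℕ} (h : m ≤ n) :
    IntermediateField.adjoin F (α '' Set.Icc 1 m) ≤
      IntermediateField.adjoin F (α '' Set.Icc 1 n) :=
  IntermediateField.adjoin.mono _ _ _ (Set.image_mono (Set.Icc_subset_Icc_right h))

lemma stmt_2_aux (α : ℕ → K) :
    ∀ (r s : ℕ) (A : Matrix (Fin (r+1)) (Fin (r+1)) K),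
      A 0 0 ≠ 0 →
      A 0 0 ∈ IntermediateField.adjoin F (α '' Set.Icc 1 s) →
      (∀ i j : Fin (r+1), ((i : ℕ), (j : ℕ)) ≠ (0, 0) →
        A i j ∈ (IntermediateField.adjoin F (α '' Set.Icc 1 ((i : ℕ) + (j : ℕ) + s)) : Set K) \
          (IntermediateField.adjoin F (α '' Set.Icc 1 ((i : ℕ) + (j : ℕ) + s - 1)) : Set K)) →
      A.det ≠ 0 := by
  intro r
  induction r with
  | zero =>
    intro s A h0 _ _
    simpa [Matrix.det_fin_one] using h0
  | succ r ih =>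
    intro s A h0 h0mem hA
    set E := IntermediateField.adjoin F (α '' Set.Icc 1 (2*r+1+s)) with hE
    -- all entries with index sum ≤ 2r+1 lie in E
    have hmem : ∀ i j : Fin (r+2), (i : ℕ) + (j : ℕ) ≤ 2*r+1 → A i j ∈ E := by
      intro i j hij
      by_cases hz : ((i : ℕ), (j : ℕ)) = (0, 0)
      · obtain ⟨hi, hj⟩ := Prod.mk.injEq .. ▸ hz
        have : i = 0 := Fin.ext (by simpa using congrArg Prod.fst hz)
        have hj0 : j = 0 := Fin.ext (by simpa using congrArg Prod.snd hz)
        subst this; subst hj0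
        exact adjoin_icc_mono α (by omega) h0mem
      · exact adjoin_icc_mono α (by omega) (hA i j hz).1
    -- the minor deleting last row and column
    set M : Matrix (Fin (r+1)) (Fin (r+1)) K := A.submatrix Fin.castSucc Fin.castSucc with hM
    have hMdet : M.det ≠ 0 := by
      refine ih s M ?_ ?_ ?_
      · simpa [hM, Matrix.submatrix_apply] using h0
      · simpa [hM, Matrix.submatrix_apply] using h0mem
      · intro i j hij
        have := hA i.castSucc j.castSucc (by simpa using hij)
        simpa [hM, Matrix.submatrix_apply] using this
    have hMmem : M.det ∈ E := by
      refine det_mem_intermediate E M fun i j => ?_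
      have hi := i.isLt
      have hj := j.isLt
      exact hmem _ _ (by simp [Fin.coe_castSucc]; omega)
    -- the corner entry
    set a : K := A (Fin.last (r+1)) (Fin.last (r+1)) with ha
    have ha_not : a ∉ E := by
      have h2 := (hA (Fin.last (r+1)) (Fin.last (r+1)) (by simp [Fin.val_last])).2
      have harith : (Fin.last (r+1) : ℕ) + (Fin.last (r+1) : ℕ) + s - 1 = 2*r+1+s := by
        simp [Fin.val_last]; omega
      rwa [harith] at h2
    -- Laplace expansion along the last row
    have hexp := Matrix.det_succ_row A (Fin.last (r+1))
    rw [← Finset.add_sum_erase _ _ (Finset.mem_univ (Fin.last (r+1)))] at hexp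
    set D : K := ∑ j ∈ Finset.univ.erase (Fin.last (r+1)),
      (-1) ^ ((Fin.last (r+1) : ℕ) + (j : ℕ)) * A (Fin.last (r+1)) j *
        (A.submatrix (Fin.last (r+1)).succAbove j.succAbove).det with hD
    have hDmem : D ∈ E := by
      refine sum_mem fun j hjmem => ?_
      have hjne : j ≠ Fin.last (r+1) := Finset.ne_of_mem_erase hjmem
      have hjlt : (j : ℕ) ≤ r := by
        have := j.isLt
        have : (j : ℕ) ≠ r + 1 := fun h => hjne (Fin.ext (by simp [Fin.val_last, h]))
        omega
      refine mul_mem (mul_mem (pow_mem (neg_mem (one_mem E)) _) ?_) ?_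
      · exact hmem _ _ (by simp [Fin.val_last]; omega)
      · refine det_mem_intermediate E _ fun i' j' => ?_
        rw [Matrix.submatrix_apply]
        refine hmem _ _ ?_
        have h1 : ((Fin.last (r+1)).succAbove i' : ℕ) ≤ r := by
          rw [Fin.succAbove_last]
          have := i'.isLt
          simpa [Fin.coe_castSucc] using by omega
        have h2 : (j.succAbove j' : ℕ) ≤ r + 1 := by
          have := (j.succAbove j').isLt
          omega
        omega
    -- the leading term
    have hlead : (-1 : K) ^ ((Fin.last (r+1) : ℕ) + (Fin.last (r+1) : ℕ)) *
        A (Fin.last (r+1)) (Fin.last (r+1)) *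
        (A.submatrix (Fin.last (r+1)).succAbove (Fin.last (r+1)).succAbove).det
        = a * M.det := by
      rw [Fin.succAbove_last]
      have : Even ((Fin.last (r+1) : ℕ) + (Fin.last (r+1) : ℕ)) := ⟨r+1, by simp [Fin.val_last]⟩
      rw [this.neg_one_pow, one_mul]
    rw [hlead] at hexp
    intro hdet
    rw [hdet] at hexp
    have hkey : a = (-D) / M.det := by
      rw [eq_div_iff hMdet]
      linear_combination -hexp
    exact ha_not (hkey ▸ div_mem (neg_mem hDmem) hMmem)

end Aux

theorem stmt_2 {F K : Type*} [Field F] [Field K] [Algebra F K]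
    (r : ℕ) (hr : 0 < r)
    (α : ℕ → K)
    (hα : ∀ i, 1 ≤ i → i ≤ 2 * r - 2 →
      α i ∉ IntermediateField.adjoin F (α '' Set.Icc 1 (i - 1)))
    (A : Matrix (Fin r) (Fin r) K)
    (hA11 : ∀ i j : Fin r, ((i : ℕ), (j : ℕ)) = (0, 0) → A i j = 1)
    (hA : ∀ i j : Fin r, ((i : ℕ), (j : ℕ)) ≠ (0, 0) →
      A i j ∈ (IntermediateField.adjoin F (α '' Set.Icc 1 ((i : ℕ) + (j : ℕ))) : Set K) \
        (IntermediateField.adjoin F (α '' Set.Icc 1 ((i : ℕ) + (j : ℕ) - 1)) : Set K)) :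
    IsUnit A := by
  rcases r with _ | m
  · omega
  rw [Matrix.isUnit_iff_isUnit_det, isUnit_iff_ne_zero]
  refine stmt_2_aux (F := F) α m 0 A ?_ ?_ ?_
  · rw [hA11 0 0 (by simp)]; exact one_ne_zero
  · rw [hA11 0 0 (by simp)]; exact one_mem _
  · intro i j hij
    simpa using hA i j hij
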